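/- The map sending E_{I(n)} to f_n for each n in the complement of the octad O9 extends to an isometry from the Kummer lattice Π onto Π̃(-1), where Π̃ = span_Z{ f_n (n ∉ O9); (1/2)Σ_{n ∈ H_i} f_n (i=1,...,5) }. -/
import Mathlib


/-- The indicator vector in `𝔽₂²⁴` of a set of labels in `{1,…,24}`
(coordinate `i : Fin 24` carries the label `i+1`). -/
def indic (s : Finset ℕ) : Fin 24 → ZMod 2 := fun i => if (i : ℕ) + 1 ∈ s then 1 else 0

/-- An explicit basis of the extended binary Golay code, given by the support sets
of nine octads and three dodecads. -/
def golayBasisSets : Fin 12 → Finset ℕ :=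
  ![{1,2,16,18,5,12,22,3}, {7,4,19,10,12,15,8,16}, {23,3,9,19,13,18,8,11},
    {6,3,22,4,21,17,15,9}, {20,10,11,17,14,13,22,12}, {24,2,10,19,9,5,14,21},
    {8,7,15,17,11,23,18,16}, {16,1,2,21,4,7,8,18}, {18,1,16,8,23,13,14,5},
    {8,7,15,9,19,23,4,22,13,18,1,16}, {18,23,13,22,3,1,11,10,2,16,7,8},
    {16,1,2,10,12,7,5,9,15,8,23,18}]

/-- The extended binary Golay code `𝒢₂₄ ⊂ 𝔽₂²⁴`. -/
def golayCode : Submodule (ZMod 2) (Fin 24 → ZMod 2) :=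
  Submodule.span (ZMod 2) (Set.range fun i => indic (golayBasisSets i))

/-- The weight of a vector in `𝔽₂²⁴`: the number of nonzero coordinates. -/
def weight (v : Fin 24 → ZMod 2) : ℕ := (Finset.univ.filter fun i => v i ≠ 0).card

/-- The ambient 24-dimensional rational quadratic space. -/
abbrev V24 := Fin 24 → ℚ

/-- The bilinear form on `V24` with Gram matrix `diag(2,…,2)` on the standard basis. -/
def B24 (u v : V24) : ℚ := 2 * ∑ i, u i * v i

/-- The generators `f_n` of the root sublattice of type `A₁²⁴`. -/
def f24 (n : Fin 24) : V24 := fun i => if i = n then 1 else 0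

/-- The special octad `𝒪₉ = {3,5,6,9,15,19,23,24}`. -/
def O9 : Finset ℕ := {3, 5, 6, 9, 15, 19, 23, 24}

/-- The five octads `ℋ₁, …, ℋ₅` disjoint from `𝒪₉`. -/
def Hocts : Fin 5 → Finset ℕ :=
  ![{1,2,4,12,13,14,17,18}, {1,2,8,11,14,16,17,22}, {1,8,10,11,13,17,18,21},
    {1,4,11,13,14,16,20,21}, {2,7,8,10,12,17,18,22}]

/-- `Π̃ = span_ℤ{ f_n (n ∉ 𝒪₉); (1/2) Σ_{n ∈ ℋᵢ} f_n (i = 1,…,5) }`. -/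
def PiTildeSpan : Submodule ℤ V24 :=
  Submodule.span ℤ
    ({ v | ∃ n : Fin 24, (n : ℕ) + 1 ∉ O9 ∧ v = f24 n } ∪
     { v | ∃ i : Fin 5,
        v = (2 : ℚ)⁻¹ • ∑ n ∈ Finset.univ.filter (fun n : Fin 24 => (n : ℕ) + 1 ∈ Hocts i), f24 n })

/-- The hypercube `𝔽₂⁴`. -/
abbrev F16 := Fin 4 → ZMod 2

/-- The ambient 16-dimensional rational quadratic space containing the Kummer lattice. -/
abbrev VK := F16 → ℚ

/-- The bilinear form on `VK` with Gram matrix `diag(-2,…,-2)` on the standard basis. -/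
def BK (u v : VK) : ℚ := -2 * ∑ a, u a * v a

/-- The exceptional classes `E_a`, `a ∈ 𝔽₂⁴`: the standard basis vectors, of norm `-2`. -/
def EK (a : F16) : VK := fun b => if b = a then 1 else 0

/-- A subset of `𝔽₂⁴` is an affine hyperplane if it is the solution set of a
non-trivial affine-linear equation. -/
def IsAffineHyperplane (H : Finset F16) : Prop :=
  ∃ (φ : F16 →ₗ[ZMod 2] ZMod 2) (c : ZMod 2), φ ≠ 0 ∧ ∀ a, a ∈ H ↔ φ a = c

/-- The Kummer lattice `Π`, spanned by the `E_a` and the half sums over all affine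
hyperplanes of `𝔽₂⁴`. -/
def KummerLat : Submodule ℤ VK :=
  Submodule.span ℤ (Set.range EK ∪
    { v | ∃ H : Finset F16, IsAffineHyperplane H ∧ v = (2 : ℚ)⁻¹ • ∑ a ∈ H, EK a })

/-- Shorthand for a vector in `𝔽₂⁴`. -/
def v4 (a b c d : ZMod 2) : F16 := ![a, b, c, d]

/-- The labelling map `I` from the complement of `𝒪₉` to the hypercube `𝔽₂⁴`. -/
def Imap : ℕ → F16
  | 1 => v4 0 0 0 0
  | 2 => v4 0 0 1 1
  | 4 => v4 0 1 1 0
  | 7 => v4 1 1 1 1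
  | 8 => v4 1 0 0 1
  | 10 => v4 1 1 0 1
  | 11 => v4 1 0 0 0
  | 12 => v4 0 1 1 1
  | 13 => v4 0 1 0 0
  | 14 => v4 0 0 1 0
  | 16 => v4 1 0 1 0
  | 17 => v4 0 0 0 1
  | 18 => v4 0 1 0 1
  | 20 => v4 1 1 1 0
  | 21 => v4 1 1 0 0
  | 22 => v4 1 0 1 1
  | _ => v4 0 0 0 0

namespace KummerAux

def kIdx : Fin 5 → Fin 4 := ![0,1,2,3,3]
def kVal : Fin 5 → ZMod 2 := ![0,0,0,0,1]

def invI : F16 → Fin 24 := fun a =>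
  (![0,10,12,20,13,15,3,19,16,7,17,9,1,21,11,6] : Fin 16 → Fin 24)
    ⟨(a 0).val + 2*(a 1).val + 4*(a 2).val + 8*(a 3).val, by
      have h0 := ZMod.val_lt (a 0); have h1 := ZMod.val_lt (a 1)
      have h2 := ZMod.val_lt (a 2); have h3 := ZMod.val_lt (a 3); omega⟩

lemma invI_spec : ∀ a : F16, ((invI a : ℕ) + 1 ∉ O9) ∧ Imap ((invI a : ℕ) + 1) = a := by decide
lemma invI_Imap : ∀ n : Fin 24, (n:ℕ)+1 ∉ O9 → invI (Imap ((n:ℕ)+1)) = n := by decide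
lemma mem_Hocts_iff : ∀ n : Fin 24, (n:ℕ)+1 ∉ O9 → ∀ i : Fin 5,
    ((n:ℕ)+1 ∈ Hocts i ↔ (Imap ((n:ℕ)+1)) (kIdx i) = kVal i) := by decide
lemma O9_Hocts : ∀ n : Fin 24, (n:ℕ)+1 ∈ O9 → ∀ i : Fin 5, (n:ℕ)+1 ∉ Hocts i := by decide
lemma exists_S : ∀ t : F16, t ≠ 0 → ∀ c : ZMod 2, ∃ S : Finset (Fin 5),
    ∀ a : F16, (if (∑ j, a j * t j) = c then (1:ZMod 2) else 0)
      = ∑ i ∈ S, (if a (kIdx i) = kVal i then 1 else 0) := by decide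

lemma Imap_injOn {m n : Fin 24} (hm : (m:ℕ)+1 ∉ O9) (hn : (n:ℕ)+1 ∉ O9)
    (h : Imap ((m:ℕ)+1) = Imap ((n:ℕ)+1)) : m = n := by
  have h2 := invI_Imap m hm
  rw [h, invI_Imap n hn] at h2
  exact h2.symm

def phi : VK →ₗ[ℚ] V24 where
  toFun v := fun i => if ((i:ℕ)+1) ∈ O9 then 0 else v (Imap ((i:ℕ)+1))
  map_add' u v := by funext i; by_cases h : ((i:ℕ)+1) ∈ O9 <;> simp [h]
  map_smul' c v := by funext i; by_cases h : ((i:ℕ)+1) ∈ O9 <;> simp [h]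

lemma phi_apply (v : VK) (i : Fin 24) :
    phi v i = if ((i:ℕ)+1) ∈ O9 then 0 else v (Imap ((i:ℕ)+1)) := rfl

lemma phi_EK (n : Fin 24) (h : (n:ℕ)+1 ∉ O9) : phi (EK (Imap ((n:ℕ)+1))) = f24 n := by
  funext i
  rw [phi_apply, f24]
  by_cases hi : ((i:ℕ)+1) ∈ O9
  · have hne : i ≠ n := fun he => h (he ▸ hi)
    simp [hi, hne]
  · rw [if_neg hi, EK]
    by_cases he : i = n
    · subst he; simp
    · have hne : Imap ((i:ℕ)+1) ≠ Imap ((n:ℕ)+1) := fun hh => he (Imap_injOn hi h hh)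
      simp [he, hne]

lemma phi_inj : Function.Injective phi := by
  intro u v h
  funext a
  obtain ⟨hn, he⟩ := invI_spec a
  have h2 := congrFun h (invI a)
  rwa [phi_apply, phi_apply, if_neg hn, if_neg hn, he] at h2

lemma phi_isom (u v : VK) : B24 (phi u) (phi v) = - BK u v := by
  unfold B24 BK
  have key : ∑ i : Fin 24, phi u i * phi v i = ∑ a : F16, u a * v a := by
    rw [← Finset.sum_filter_add_sum_filter_not Finset.univ
      (fun i : Fin 24 => ((i:ℕ)+1) ∈ O9) (fun i => phi u i * phi v i)]
    have h1 : ∑ i ∈ Finset.univ.filter (fun i : Fin 24 => ((i:ℕ)+1) ∈ O9),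
        phi u i * phi v i = 0 := by
      apply Finset.sum_eq_zero
      intro i hi
      rw [Finset.mem_filter] at hi
      simp [phi_apply, hi.2]
    rw [h1, zero_add]
    refine Finset.sum_nbij' (fun i : Fin 24 => Imap ((i:ℕ)+1)) (fun a => invI a)
      (fun a _ => Finset.mem_univ _) (fun a _ => ?_) (fun a ha => ?_)
      (fun a _ => (invI_spec a).2) (fun i hi => ?_)
    · simp only [Finset.mem_filter]
      exact ⟨Finset.mem_univ _, (invI_spec a).1⟩
    · simp only [Finset.mem_filter] at ha
      exact invI_Imap a ha.2
    · simp only [Finset.mem_filter] at hi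
      show phi u i * phi v i = u (Imap ((i:ℕ)+1)) * v (Imap ((i:ℕ)+1))
      rw [phi_apply, phi_apply, if_neg hi.2, if_neg hi.2]
  rw [key]; ring

lemma sum_f24_apply (s : Finset (Fin 24)) (j : Fin 24) :
    (∑ n ∈ s, f24 n) j = if j ∈ s then 1 else 0 := by
  rw [Finset.sum_apply]
  simp [f24]

lemma sum_EK_apply (H : Finset F16) (b : F16) :
    (∑ a ∈ H, EK a) b = if b ∈ H then 1 else 0 := by
  rw [Finset.sum_apply]
  simp [EK]

lemma intvec_mem (v : V24) (h0 : ∀ n : Fin 24, (n:ℕ)+1 ∈ O9 → v n = 0)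
    (hz : ∀ n : Fin 24, ∃ m : ℤ, v n = m) : v ∈ PiTildeSpan := by
  have hv : v = ∑ n : Fin 24, v n • f24 n := by
    funext j
    rw [Finset.sum_apply]
    simp [f24]
  rw [hv]
  apply Submodule.sum_mem
  intro n _
  by_cases hn : (n:ℕ)+1 ∈ O9
  · rw [h0 n hn, zero_smul]; exact Submodule.zero_mem _
  · obtain ⟨m, hm⟩ := hz n
    rw [hm, Int.cast_smul_eq_zsmul]
    exact Submodule.smul_mem _ m (Submodule.subset_span (Or.inl ⟨n, hn, rfl⟩))

def hgen (i : Fin 5) : V24 :=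
  (2 : ℚ)⁻¹ • ∑ n ∈ Finset.univ.filter (fun n : Fin 24 => (n : ℕ) + 1 ∈ Hocts i), f24 n

lemma hgen_mem (i : Fin 5) : hgen i ∈ PiTildeSpan :=
  Submodule.subset_span (Or.inr ⟨i, rfl⟩)

lemma hgen_apply (i : Fin 5) (n : Fin 24) :
    hgen i n = (2:ℚ)⁻¹ * (if (n:ℕ)+1 ∈ Hocts i then 1 else 0) := by
  rw [hgen, Pi.smul_apply, smul_eq_mul, sum_f24_apply]
  by_cases h : (n:ℕ)+1 ∈ Hocts i <;> simp [h]

lemma phi_halfsum_mem (H : Finset F16) (hH : IsAffineHyperplane H) :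
    phi ((2:ℚ)⁻¹ • ∑ a ∈ H, EK a) ∈ PiTildeSpan := by
  obtain ⟨ℓ, c, hℓ, hmem⟩ := hH
  set t : F16 := fun j => ℓ (fun k => if j = k then 1 else 0) with ht
  have hla : ∀ a : F16, ℓ a = ∑ j, a j * t j := by
    intro a
    conv_lhs => rw [pi_eq_sum_univ a]
    rw [map_sum]
    refine Finset.sum_congr rfl fun j _ => ?_
    rw [map_smul, smul_eq_mul]
  have ht0 : t ≠ 0 := by
    intro h
    apply hℓ
    apply LinearMap.ext
    intro a
    rw [hla a, h]
    simp
  obtain ⟨S, hS⟩ := exists_S t ht0 c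
  have hSa : ∀ a : F16, (if a ∈ H then (1:ZMod 2) else 0)
      = ∑ i ∈ S, (if a (kIdx i) = kVal i then 1 else 0) := by
    intro a
    rw [← hS a]
    have hiff : (a ∈ H) ↔ (∑ j, a j * t j = c) := (hmem a).trans (by rw [hla a])
    simp only [hiff]
  have hpar : ∀ n : Fin 24, (n:ℕ)+1 ∉ O9 → ∃ m : ℤ,
      (if Imap ((n:ℕ)+1) ∈ H then (1:ℤ) else 0)
        - ((S.filter fun i => (n:ℕ)+1 ∈ Hocts i).card : ℤ) = 2 * m := by
    intro n hn
    set x : ℕ := if Imap ((n:ℕ)+1) ∈ H then 1 else 0 with hx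
    have h2 : (x : ZMod 2) = ((S.filter fun i => (n:ℕ)+1 ∈ Hocts i).card : ZMod 2) := by
      rw [← Finset.sum_boole]
      have e1 : ((x:ℕ) : ZMod 2) = if Imap ((n:ℕ)+1) ∈ H then (1:ZMod 2) else 0 := by
        rw [hx]; split_ifs <;> simp
      rw [e1, hSa (Imap ((n:ℕ)+1))]
      refine Finset.sum_congr rfl fun i _ => ?_
      simp only [mem_Hocts_iff n hn i]
    rw [ZMod.natCast_eq_natCast_iff] at h2
    obtain ⟨k, hk⟩ := (Nat.modEq_iff_dvd).mp h2
    have hxz : ((x:ℕ):ℤ) = if Imap ((n:ℕ)+1) ∈ H then (1:ℤ) else 0 := by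
      rw [hx]; split_ifs <;> simp
    refine ⟨-k, ?_⟩
    rw [← hxz]
    omega
  have hw : phi ((2:ℚ)⁻¹ • ∑ a ∈ H, EK a) - ∑ i ∈ S, hgen i ∈ PiTildeSpan := by
    apply intvec_mem
    · intro n hn
      rw [Pi.sub_apply, phi_apply, if_pos hn, Finset.sum_apply]
      rw [zero_sub, neg_eq_zero]
      exact Finset.sum_eq_zero fun i _ => by
        rw [hgen_apply, if_neg (O9_Hocts n hn i), mul_zero]
    · intro n
      by_cases hn : (n:ℕ)+1 ∈ O9
      · refine ⟨0, ?_⟩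
        rw [Pi.sub_apply, phi_apply, if_pos hn, Finset.sum_apply]
        have hz : ∑ i ∈ S, hgen i n = 0 := Finset.sum_eq_zero fun i _ => by
          rw [hgen_apply, if_neg (O9_Hocts n hn i), mul_zero]
        rw [hz]; norm_num
      · obtain ⟨m, hm⟩ := hpar n hn
        refine ⟨m, ?_⟩
        rw [Pi.sub_apply, phi_apply, if_neg hn, Pi.smul_apply, smul_eq_mul, sum_EK_apply,
          Finset.sum_apply]
        have hsum : ∑ i ∈ S, hgen i n
            = (2:ℚ)⁻¹ * ((S.filter fun i => (n:ℕ)+1 ∈ Hocts i).card : ℚ) := by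
          simp only [hgen_apply]
          rw [← Finset.mul_sum, Finset.sum_boole]
        rw [hsum]
        have h3 : (if Imap ((n:ℕ)+1) ∈ H then (1:ℚ) else 0)
            = ((if Imap ((n:ℕ)+1) ∈ H then (1:ℤ) else 0 : ℤ) : ℚ) := by
          split_ifs <;> simp
        rw [h3]
        have hq : ((if Imap ((n:ℕ)+1) ∈ H then (1:ℤ) else 0 : ℤ) : ℚ)
            - ((S.filter fun i => (n:ℕ)+1 ∈ Hocts i).card : ℚ) = 2*(m:ℚ) := by
          exact_mod_cast hm
        linarith
  have hs : (∑ i ∈ S, hgen i) ∈ PiTildeSpan := Submodule.sum_mem _ fun i _ => hgen_mem i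
  have hfin := Submodule.add_mem _ hw hs
  rwa [sub_add_cancel] at hfin

lemma Kfin_hyp (i : Fin 5) : IsAffineHyperplane
    (Finset.univ.filter fun a : F16 => a (kIdx i) = kVal i) := by
  refine ⟨LinearMap.proj (kIdx i), kVal i, ?_, fun a => ?_⟩
  · intro h
    have h2 := LinearMap.ext_iff.mp h (Pi.single (kIdx i) 1)
    simp at h2
  · simp

lemma phi_halfsum_K (i : Fin 5) :
    phi ((2:ℚ)⁻¹ • ∑ a ∈ Finset.univ.filter (fun a : F16 => a (kIdx i) = kVal i), EK a)
      = hgen i := by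
  funext n
  rw [phi_apply, hgen_apply]
  by_cases hn : (n:ℕ)+1 ∈ O9
  · rw [if_pos hn, if_neg (O9_Hocts n hn i), mul_zero]
  · rw [if_neg hn, Pi.smul_apply, smul_eq_mul, sum_EK_apply]
    congr 1
    simp only [Finset.mem_filter, Finset.mem_univ, true_and, mem_Hocts_iff n hn i]

lemma map_lat : Submodule.map (phi.restrictScalars ℤ) KummerLat = PiTildeSpan := by
  rw [KummerLat, Submodule.map_span]
  apply le_antisymm
  · rw [Submodule.span_le]
    rintro x ⟨y, hy, rfl⟩
    rcases hy with ⟨a, rfl⟩ | ⟨H, hH, rfl⟩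
    · obtain ⟨hn, he⟩ := invI_spec a
      have hphi : (phi.restrictScalars ℤ) (EK a) = f24 (invI a) := by
        show phi (EK a) = f24 (invI a)
        conv_lhs => rw [← he]
        exact phi_EK _ hn
      rw [hphi]
      exact Submodule.subset_span (Or.inl ⟨invI a, hn, rfl⟩)
    · exact phi_halfsum_mem H hH
  · rw [PiTildeSpan, Submodule.span_le]
    rintro x (⟨n, hn, rfl⟩ | ⟨i, rfl⟩)
    · exact Submodule.subset_span ⟨EK (Imap ((n:ℕ)+1)), Or.inl ⟨_, rfl⟩, phi_EK n hn⟩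
    · exact Submodule.subset_span
        ⟨(2:ℚ)⁻¹ • ∑ a ∈ Finset.univ.filter (fun a : F16 => a (kIdx i) = kVal i), EK a,
          Or.inr ⟨_, Kfin_hyp i, rfl⟩, phi_halfsum_K i⟩

end KummerAux

/-- The assignment `E_{I(n)} ↦ f_n` (for `n` in the complement of the octad `𝒪₉`)
extends to an isometry from the Kummer lattice `Π` onto `Π̃(-1)`. -/

theorem kummer_isometric_to_piTilde :
    ∃ φ : VK →ₗ[ℚ] V24,
      (∀ n : Fin 24, (n : ℕ) + 1 ∉ O9 → φ (EK (Imap ((n : ℕ) + 1))) = f24 n) ∧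
      Set.BijOn φ ↑KummerLat ↑PiTildeSpan ∧
      (∀ u ∈ KummerLat, ∀ v ∈ KummerLat, B24 (φ u) (φ v) = - BK u v) := by
  refine ⟨KummerAux.phi, fun n hn => KummerAux.phi_EK n hn, ?_,
    fun u _ v _ => KummerAux.phi_isom u v⟩
  have him : ⇑KummerAux.phi '' ↑KummerLat = ↑PiTildeSpan := by
    rw [← KummerAux.map_lat, Submodule.map_coe]
    rfl
  have hb := (KummerAux.phi_inj.injOn (s := ↑KummerLat)).bijOn_image
  rwa [him] at hb
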